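/- Let q ≥ 2 be an integer, let e_1, …, e_q be powers of 3 (i.e., e_t = 3^{m_t} for nonnegative integers m_t), and let a_1, …, a_q and b_1, …, b_q be nonnegative integers satisfying: a_t + b_t = e_t for all t ∈ [q]; b_1 = 0 and a_q = 0; and b_{t+1} = a_t with a_t > 0 for all t ∈ [q−1]. Then e_1 = e_q. (Equivalently: if e_1 ≠ e_q, no such sequences a, b exist.) -/

import Mathlib

theorem power_of_three_chain_aux (q : ℕ) (hq : 2 ≤ q) (m a b : Fin q → ℕ)
    (hq0 : 0 < q)
    (hab : ∀ t : Fin q, a t + b t = 3 ^ m t)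
    (hb1 : b ⟨0, hq0⟩ = 0)
    (hchain : ∀ (t : ℕ) (h : t + 1 < q),
      b ⟨t + 1, h⟩ = a ⟨t, Nat.lt_of_succ_lt h⟩ ∧ 0 < a ⟨t, Nat.lt_of_succ_lt h⟩) :
    ∀ (t : ℕ) (ht : t < q) (ht' : t + 1 < q),
      3 ^ m ⟨0, hq0⟩ ∣ a ⟨t, ht⟩ ∧ ¬ (3 * 3 ^ m ⟨0, hq0⟩ ∣ a ⟨t, ht⟩) := by
  have hEpos : 0 < 3 ^ m ⟨0, hq0⟩ := by positivity
  intro t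
  induction t with
  | zero =>
    intro ht ht'
    have h0 := hab ⟨0, hq0⟩
    rw [hb1] at h0
    have ha0 : a ⟨0, ht⟩ = 3 ^ m ⟨0, hq0⟩ := by
      have : (⟨0, ht⟩ : Fin q) = ⟨0, hq0⟩ := rfl
      rw [this]; omega
    rw [ha0]
    refine ⟨dvd_refl _, fun h => ?_⟩
    have := Nat.le_of_dvd hEpos h
    omega
  | succ t ih =>
    intro ht ht'
    have htq : t < q := by omega
    obtain ⟨ihd, ihnd⟩ := ih htq ht
    have hch := hchain t ht
    have hch2 := hchain (t + 1) ht'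
    have hs := hab ⟨t + 1, ht⟩
    rw [hch.1] at hs
    have hapos : 0 < a ⟨t, htq⟩ := hch.2
    have hEle : 3 ^ m ⟨0, hq0⟩ ≤ a ⟨t, htq⟩ := Nat.le_of_dvd hapos ihd
    have hEleN : 3 ^ m ⟨0, hq0⟩ ≤ 3 ^ m ⟨t + 1, ht⟩ := by omega
    have hmle : m ⟨0, hq0⟩ ≤ m ⟨t + 1, ht⟩ := by
      by_contra hlt
      push_neg at hlt
      have := Nat.pow_lt_pow_right (by norm_num : 1 < 3) hlt
      omega
    have hEdvdN : 3 ^ m ⟨0, hq0⟩ ∣ 3 ^ m ⟨t + 1, ht⟩ := pow_dvd_pow 3 hmle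
    constructor
    · have heq : a ⟨t + 1, ht⟩ = 3 ^ m ⟨t + 1, ht⟩ - a ⟨t, htq⟩ := by omega
      rw [heq]
      exact Nat.dvd_sub hEdvdN ihd
    · intro hdvd
      rcases Nat.lt_or_ge (m ⟨0, hq0⟩) (m ⟨t + 1, ht⟩) with hlt | hge
      · have h3E : 3 * 3 ^ m ⟨0, hq0⟩ ∣ 3 ^ m ⟨t + 1, ht⟩ := by
          have h1 : (3 : ℕ) * 3 ^ m ⟨0, hq0⟩ = 3 ^ (m ⟨0, hq0⟩ + 1) := by ring
          rw [h1]
          exact pow_dvd_pow 3 (by omega)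
        apply ihnd
        have heq : a ⟨t, htq⟩ = 3 ^ m ⟨t + 1, ht⟩ - a ⟨t + 1, ht⟩ := by omega
        rw [heq]
        exact Nat.dvd_sub h3E hdvd
      · have hmeq : m ⟨t + 1, ht⟩ = m ⟨0, hq0⟩ := le_antisymm hge hmle
        have hNE : 3 ^ m ⟨t + 1, ht⟩ = 3 ^ m ⟨0, hq0⟩ := by rw [hmeq]
        have ha1pos : 0 < a ⟨t + 1, ht⟩ := hch2.2
        omega

/-- Let `q ≥ 2`, let `e_t = 3 ^ (m t)` be powers of three, and let
`a, b : Fin q → ℕ` satisfy `a t + b t = e t` for all `t`, `b 1 = 0`, `a q = 0`, and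
`b (t+1) = a t > 0` for all `t ∈ [q−1]`. Then `e 1 = e q`. -/
theorem power_of_three_chain (q : ℕ) (hq : 2 ≤ q) (m a b : Fin q → ℕ)
    (hab : ∀ t : Fin q, a t + b t = 3 ^ m t)
    (hb1 : b ⟨0, by omega⟩ = 0)
    (haq : a ⟨q - 1, by omega⟩ = 0)
    (hchain : ∀ (t : ℕ) (h : t + 1 < q),
      b ⟨t + 1, h⟩ = a ⟨t, Nat.lt_of_succ_lt h⟩ ∧ 0 < a ⟨t, Nat.lt_of_succ_lt h⟩) :
    3 ^ m ⟨0, by omega⟩ = 3 ^ m ⟨q - 1, by omega⟩ := by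
  have hq0 : 0 < q := by omega
  have hq1 : q - 1 < q := by omega
  have h2' : q - 2 + 1 < q := by omega
  have h2 : q - 2 < q := Nat.lt_of_succ_lt h2'
  have haq' : a ⟨q - 1, hq1⟩ = 0 := haq
  suffices h : 3 ^ m ⟨0, hq0⟩ = 3 ^ m ⟨q - 1, hq1⟩ from h
  have key := power_of_three_chain_aux q hq m a b hq0 hab hb1 hchain
  obtain ⟨hd, hnd⟩ := key (q - 2) h2 h2'
  have hch := hchain (q - 2) h2'
  have hbq : b ⟨q - 1, hq1⟩ = a ⟨q - 2, h2⟩ := by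
    have hidx : (⟨q - 2 + 1, h2'⟩ : Fin q) = ⟨q - 1, hq1⟩ := by
      ext; simp; omega
    rw [← hidx]
    exact hch.1
  have hs := hab ⟨q - 1, hq1⟩
  rw [haq', hbq] at hs
  have hd' : 3 ^ m ⟨0, hq0⟩ ∣ 3 ^ m ⟨q - 1, hq1⟩ := by
    rw [← hs]; simpa using hd
  have hnd' : ¬ (3 * 3 ^ m ⟨0, hq0⟩ ∣ 3 ^ m ⟨q - 1, hq1⟩) := by
    rw [← hs]; simpa using hnd
  have hmle : m ⟨0, hq0⟩ ≤ m ⟨q - 1, hq1⟩ :=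
    (Nat.pow_dvd_pow_iff_le_right (by norm_num : 1 < 3)).mp hd'
  have hmge : m ⟨q - 1, hq1⟩ ≤ m ⟨0, hq0⟩ := by
    by_contra hlt
    push_neg at hlt
    apply hnd'
    have h1 : (3 : ℕ) * 3 ^ m ⟨0, hq0⟩ = 3 ^ (m ⟨0, hq0⟩ + 1) := by ring
    rw [h1]
    exact pow_dvd_pow 3 (by omega)
  rw [le_antisymm hmle hmge]
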